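/- arXiv:math/0105071 — 2 statements merged into one kernel-verified Lean document; each statement's English description precedes it below -/
import Mathlib

section
/- The dimension of the irreducible Temperley-Lieb module V_n^t equals C(n, (n−t)/2) − C(n, (n−t−2)/2), when n − t is even and nonnegative. -/
open Finset

namespace TLdim

def Cond {n : ℕ} (f : Fin n → Option (Fin n)) : Prop :=
  (∀ i j, f i = some j → f j = some i ∧ j ≠ i) ∧
  (∀ i j, f i = some j → ∀ l, i < l → l < j → f l ≠ none) ∧
  (∀ i j a b, f i = some j → f a = some b → ¬(i < a ∧ a < j ∧ j < b))

def M (n t : ℕ) : Type :=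
  {f : Fin n → Option (Fin n) // Cond f ∧ (univ.filter (fun i => f i = none)).card = t}

instance (n t : ℕ) : Finite (M n t) := by unfold M; infer_instance

def res {n : ℕ} (f : Fin (n+1) → Option (Fin (n+1))) : Fin n → Option (Fin n) :=
  fun i => (f i.castSucc).bind (fun j => if h : (j:ℕ) < n then some ⟨j,h⟩ else none)

lemma res_eq_some {n : ℕ} {f : Fin (n+1) → Option (Fin (n+1))} {i j : Fin n} :
    res f i = some j ↔ f i.castSucc = some j.castSucc := by
  unfold res
  cases hf : f i.castSucc with
  | none => simp
  | some j₁ =>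
    rw [Option.bind_some]
    constructor
    · intro h
      split at h
      · next hlt =>
        cases h
        rfl
      · simp at h
    · intro h
      cases h
      simp

lemma res_eq_none {n : ℕ} {f : Fin (n+1) → Option (Fin (n+1))} {i : Fin n} :
    res f i = none ↔ f i.castSucc = none ∨ f i.castSucc = some (Fin.last n) := by
  unfold res
  cases hf : f i.castSucc with
  | none => simp
  | some j₁ =>
    rw [Option.bind_some]
    constructor
    · intro h
      split at h
      · simp at h
      · next hlt =>
        right
        congr 1
        have := j₁.isLt
        exact Fin.ext (by simp [Fin.last]; omega)
    · rintro (h | h)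
      · simp at h
      · cases h
        simp [Fin.last]

def ext {n : ℕ} (g : Fin n → Option (Fin n)) : Fin (n+1) → Option (Fin (n+1)) :=
  fun i => if h : (i:ℕ) < n then (g ⟨i,h⟩).map Fin.castSucc else none

def extB {n : ℕ} (g : Fin n → Option (Fin n)) (i₀ : Fin n) : Fin (n+1) → Option (Fin (n+1)) :=
  fun i => if h : (i:ℕ) < n then
      (if (⟨i,h⟩ : Fin n) = i₀ then some (Fin.last n) else (g ⟨i,h⟩).map Fin.castSucc)
    else some i₀.castSucc

lemma ext_castSucc {n : ℕ} (g : Fin n → Option (Fin n)) (i : Fin n) :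
    ext g i.castSucc = (g i).map Fin.castSucc := by
  unfold ext
  rw [dif_pos (by simpa using i.isLt)]
  simp

lemma ext_last {n : ℕ} (g : Fin n → Option (Fin n)) : ext g (Fin.last n) = none := by
  simp [ext, Fin.last]

lemma extB_castSucc {n : ℕ} (g : Fin n → Option (Fin n)) (i₀ i : Fin n) :
    extB g i₀ i.castSucc = if i = i₀ then some (Fin.last n) else (g i).map Fin.castSucc := by
  unfold extB
  rw [dif_pos (by simpa using i.isLt)]
  simp

lemma extB_last {n : ℕ} (g : Fin n → Option (Fin n)) (i₀ : Fin n) :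
    extB g i₀ (Fin.last n) = some i₀.castSucc := by
  simp [extB, Fin.last]

lemma eq_last_of_not_lt {n : ℕ} {j : Fin (n+1)} (h : ¬ (j:ℕ) < n) : j = Fin.last n :=
  Fin.ext (by have := j.isLt; simp [Fin.last]; omega)

/-- every point of `Fin (n+1)` is either a castSucc or the last. -/
lemma castSucc_or_last {n : ℕ} (j : Fin (n+1)) :
    (∃ j' : Fin n, j = j'.castSucc) ∨ j = Fin.last n := by
  by_cases h : (j:ℕ) < n
  · exact Or.inl ⟨⟨j, h⟩, Fin.ext rfl⟩
  · exact Or.inr (eq_last_of_not_lt h)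

lemma filter_card_succ {n : ℕ} (p : Fin (n+1) → Prop) [DecidablePred p] :
    (univ.filter p).card
      = (univ.filter (fun i : Fin n => p i.castSucc)).card + (if p (Fin.last n) then 1 else 0) := by
  rw [Finset.card_filter, Finset.card_filter, Fin.sum_univ_castSucc]

lemma cslt {n : ℕ} {i j : Fin n} (h : i < j) : i.castSucc < j.castSucc := by
  simpa using h

lemma csltlast {n : ℕ} (i : Fin n) : i.castSucc < Fin.last n := Fin.castSucc_lt_last i

lemma cond_res {n : ℕ} {f : Fin (n+1) → Option (Fin (n+1))} (hf : Cond f) : Cond (res f) := by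
  obtain ⟨h1, h2, h3⟩ := hf
  refine ⟨?_, ?_, ?_⟩
  · intro i j hij
    rw [res_eq_some] at hij
    obtain ⟨hs, hne⟩ := h1 _ _ hij
    exact ⟨res_eq_some.2 hs, fun h => hne (by rw [h])⟩
  · intro i j hij l hil hlj
    rw [res_eq_some] at hij
    rw [Ne, res_eq_none]
    rintro (h | h)
    · exact h2 _ _ hij l.castSucc (cslt hil) (cslt hlj) h
    · exact h3 _ _ _ _ hij h ⟨cslt hil, cslt hlj, csltlast _⟩
  · intro i j a b hij hab hc
    rw [res_eq_some] at hij hab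
    exact h3 _ _ _ _ hij hab ⟨cslt hc.1, cslt hc.2.1, cslt hc.2.2⟩

lemma ext_eq_some {n : ℕ} {g : Fin n → Option (Fin n)} {i : Fin (n+1)} {j : Fin (n+1)}
    (h : ext g i = some j) : ∃ i' j', i = i'.castSucc ∧ j = j'.castSucc ∧ g i' = some j' := by
  rcases castSucc_or_last i with ⟨i', rfl⟩ | rfl
  · rw [ext_castSucc] at h
    rcases Option.map_eq_some_iff.1 h with ⟨j', hj, rfl⟩
    exact ⟨i', j', rfl, rfl, hj⟩
  · rw [ext_last] at h; exact absurd h (by simp)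

lemma cond_ext {n : ℕ} {g : Fin n → Option (Fin n)} (hg : Cond g) : Cond (ext g) := by
  obtain ⟨h1, h2, h3⟩ := hg
  refine ⟨?_, ?_, ?_⟩
  · intro i j hij
    obtain ⟨i', j', rfl, rfl, hij'⟩ := ext_eq_some hij
    obtain ⟨hs, hne⟩ := h1 _ _ hij'
    refine ⟨?_, by simpa using hne⟩
    rw [ext_castSucc, hs]; rfl
  · intro i j hij l hil hlj
    obtain ⟨i', j', rfl, rfl, hij'⟩ := ext_eq_some hij
    rcases castSucc_or_last l with ⟨l', rfl⟩ | rfl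
    · have h := h2 _ _ hij' l' (by simpa using hil) (by simpa using hlj)
      rw [ext_castSucc]
      cases hgl : g l'
      · exact absurd hgl h
      · simp [hgl]
    · exact absurd hlj (by simp [Fin.le_last])
  · intro i j a b hij hab hc
    obtain ⟨i', j', rfl, rfl, hij'⟩ := ext_eq_some hij
    obtain ⟨a', b', rfl, rfl, hab'⟩ := ext_eq_some hab
    exact h3 _ _ _ _ hij' hab'
      ⟨by simpa using hc.1, by simpa using hc.2.1, by simpa using hc.2.2⟩

lemma extB_cs_ne {n : ℕ} (g : Fin n → Option (Fin n)) {i₀ i : Fin n} (h : i ≠ i₀) :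
    extB g i₀ i.castSucc = (g i).map Fin.castSucc := by
  rw [extB_castSucc, if_neg h]

lemma extB_cs_eq {n : ℕ} (g : Fin n → Option (Fin n)) (i₀ : Fin n) :
    extB g i₀ i₀.castSucc = some (Fin.last n) := by
  rw [extB_castSucc, if_pos rfl]

lemma cond_extB {n : ℕ} {g : Fin n → Option (Fin n)} (hg : Cond g) (i₀ : Fin n)
    (h0 : g i₀ = none) (hmax : ∀ j, i₀ < j → g j ≠ none) : Cond (extB g i₀) := by
  obtain ⟨h1, h2, h3⟩ := hg
  have hsome : ∀ i j : Fin (n+1), extB g i₀ i = some j →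
      (i = Fin.last n ∧ j = i₀.castSucc) ∨
      (i = i₀.castSucc ∧ j = Fin.last n) ∨
      (∃ i' j', i' ≠ i₀ ∧ i = i'.castSucc ∧ j = j'.castSucc ∧ g i' = some j') := by
    intro i j h
    rcases castSucc_or_last i with ⟨i', rfl⟩ | rfl
    · by_cases hi : i' = i₀
      · subst hi
        rw [extB_cs_eq] at h
        exact Or.inr (Or.inl ⟨rfl, by cases h; rfl⟩)
      · rw [extB_cs_ne _ hi] at h
        rcases Option.map_eq_some_iff.1 h with ⟨j', hj, rfl⟩
        exact Or.inr (Or.inr ⟨i', j', hi, rfl, rfl, hj⟩)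
    · rw [extB_last] at h
      exact Or.inl ⟨rfl, by cases h; rfl⟩
  refine ⟨?_, ?_, ?_⟩
  · intro i j hij
    rcases hsome _ _ hij with ⟨rfl, rfl⟩ | ⟨rfl, rfl⟩ | ⟨i', j', hne, rfl, rfl, hij'⟩
    · exact ⟨extB_cs_eq g i₀, (Fin.castSucc_lt_last i₀).ne⟩
    · exact ⟨extB_last g i₀, (Fin.castSucc_lt_last i₀).ne'⟩
    · obtain ⟨hs, hne'⟩ := h1 _ _ hij'
      have hj0 : j' ≠ i₀ := fun h => by rw [h, h0] at hs; exact absurd hs (by simp)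
      refine ⟨?_, by simpa using hne'⟩
      rw [extB_cs_ne _ hj0, hs]; rfl
  · intro i j hij l hil hlj
    rcases hsome _ _ hij with ⟨rfl, rfl⟩ | ⟨rfl, rfl⟩ | ⟨i', j', hne, rfl, rfl, hij'⟩
    · exact absurd (lt_of_lt_of_le hil (Fin.le_last l)) (lt_irrefl _)
    · -- arc from i₀.castSucc to last
      rcases castSucc_or_last l with ⟨l', rfl⟩ | rfl
      · have hl0 : i₀ < l' := by simpa using hil
        have : l' ≠ i₀ := fun h => by subst h; exact absurd hl0 (lt_irrefl _)
        rw [extB_cs_ne _ this]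
        have := hmax l' hl0
        cases hgl : g l'
        · exact absurd hgl this
        · simp [hgl]
      · exact absurd hlj (lt_irrefl _)
    · -- ordinary arc
      rcases castSucc_or_last l with ⟨l', rfl⟩ | rfl
      · by_cases hl : l' = i₀
        · subst hl; rw [extB_cs_eq]; simp
        · rw [extB_cs_ne _ hl]
          have := h2 _ _ hij' l' (by simpa using hil) (by simpa using hlj)
          cases hgl : g l'
          · exact absurd hgl this
          · simp [hgl]
      · exact absurd hlj (by simp [Fin.le_last])
  · intro i j a b hij hab hc
    obtain ⟨h₁, h₂, h₃⟩ := hc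
    rcases hsome _ _ hij with ⟨rfl, rfl⟩ | ⟨rfl, rfl⟩ | ⟨i', j', hne, rfl, rfl, hij'⟩
    · exact absurd (lt_of_lt_of_le h₁ (Fin.le_last a)) (lt_irrefl _)
    · exact absurd (lt_of_lt_of_le h₃ (Fin.le_last b)) (lt_irrefl _)
    · rcases hsome _ _ hab with ⟨rfl, rfl⟩ | ⟨rfl, rfl⟩ | ⟨a', b', hne', rfl, rfl, hab'⟩
      · exact absurd (lt_of_lt_of_le h₂ (Fin.le_last _)) (lt_irrefl _)
      · -- a = i₀.castSucc, b = last : i₀ strictly inside arc (i', j')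
        have := h2 _ _ hij' i₀ (by simpa using h₁) (by simpa using h₂)
        exact this h0
      · exact h3 _ _ _ _ hij' hab' ⟨by simpa using h₁, by simpa using h₂, by simpa using h₃⟩

lemma countA {n : ℕ} {f : Fin (n+1) → Option (Fin (n+1))}
    (h1 : ∀ i j, f i = some j → f j = some i ∧ j ≠ i) (hlast : f (Fin.last n) = none) :
    (univ.filter fun i : Fin (n+1) => f i = none).card
      = (univ.filter fun i : Fin n => res f i = none).card + 1 := by
  rw [filter_card_succ, if_pos hlast]
  congr 2
  ext i
  simp only [mem_filter, mem_univ, true_and]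
  rw [res_eq_none]
  constructor
  · exact Or.inl
  · rintro (h | h)
    · exact h
    · exact absurd (h1 _ _ h).1 (by rw [hlast]; simp)

lemma count_ext {n : ℕ} (g : Fin n → Option (Fin n)) :
    (univ.filter fun i : Fin (n+1) => ext g i = none).card
      = (univ.filter fun i : Fin n => g i = none).card + 1 := by
  rw [filter_card_succ, if_pos (ext_last g)]
  congr 2
  ext i
  simp only [mem_filter, mem_univ, true_and, ext_castSucc]
  cases g i <;> simp

lemma countB_res {n : ℕ} {f : Fin (n+1) → Option (Fin (n+1))} {i₀ : Fin n}
    (h1 : ∀ i j, f i = some j → f j = some i ∧ j ≠ i)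
    (hlast : f (Fin.last n) = some i₀.castSucc) :
    (univ.filter fun i : Fin n => res f i = none).card
      = (univ.filter fun i : Fin (n+1) => f i = none).card + 1 := by
  have hkey : ∀ i : Fin n, f i.castSucc = some (Fin.last n) ↔ i = i₀ := by
    intro i
    constructor
    · intro h
      have := (h1 _ _ h).1
      rw [hlast] at this
      exact Fin.castSucc_injective _ (Option.some.inj this).symm
    · rintro rfl
      exact (h1 _ _ hlast).1
  have hset : (univ.filter fun i : Fin n => res f i = none)
      = (univ.filter fun i : Fin n => f i.castSucc = none) ∪ {i₀} := by
    ext i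
    simp only [mem_filter, mem_univ, true_and, mem_union, mem_singleton, res_eq_none, hkey]
  have hdisj : Disjoint (univ.filter fun i : Fin n => f i.castSucc = none) ({i₀} : Finset (Fin n)) := by
    simp only [disjoint_singleton_right, mem_filter, mem_univ, true_and]
    rw [(hkey i₀).2 rfl]
    simp
  rw [hset, card_union_of_disjoint hdisj, card_singleton,
    filter_card_succ (fun i : Fin (n+1) => f i = none), if_neg (by rw [hlast]; simp), add_zero]

lemma count_extB {n : ℕ} {g : Fin n → Option (Fin n)} {i₀ : Fin n} (h0 : g i₀ = none) :
    (univ.filter fun i : Fin (n+1) => extB g i₀ i = none).card + 1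
      = (univ.filter fun i : Fin n => g i = none).card := by
  rw [filter_card_succ, if_neg (by rw [extB_last]; simp)]
  have hset : (univ.filter fun i : Fin n => extB g i₀ i.castSucc = none)
      = (univ.filter fun i : Fin n => g i = none).erase i₀ := by
    ext i
    simp only [mem_filter, mem_univ, true_and, mem_erase, extB_castSucc]
    by_cases hi : i = i₀
    · subst hi; simp
    · rw [if_neg hi]
      cases g i <;> simp [hi]
  have hmem : i₀ ∈ univ.filter fun i : Fin n => g i = none := by
    simp [h0]
  rw [hset, card_erase_of_mem hmem]
  have := Finset.card_pos.2 ⟨i₀, hmem⟩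
  omega

lemma res_ext {n : ℕ} (g : Fin n → Option (Fin n)) : res (ext g) = g := by
  funext i
  cases hg : g i with
  | none => rw [res_eq_none, ext_castSucc, hg]; simp
  | some j => rw [res_eq_some, ext_castSucc, hg]; rfl

lemma ext_res {n : ℕ} {f : Fin (n+1) → Option (Fin (n+1))}
    (h1 : ∀ i j, f i = some j → f j = some i ∧ j ≠ i) (hlast : f (Fin.last n) = none) :
    ext (res f) = f := by
  funext i
  rcases castSucc_or_last i with ⟨i', rfl⟩ | rfl
  · rw [ext_castSucc]
    cases hf : f i'.castSucc with
    | none =>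
      rw [res_eq_none.2 (Or.inl hf)]; rfl
    | some j =>
      have hj : j ≠ Fin.last n := by
        intro h; subst h
        exact absurd (h1 _ _ hf).1 (by rw [hlast]; simp)
      obtain ⟨j', rfl⟩ | rfl := castSucc_or_last j
      · rw [res_eq_some.2 hf]; rfl
      · exact absurd rfl hj
  · rw [ext_last, hlast]

lemma res_extB {n : ℕ} (g : Fin n → Option (Fin n)) (i₀ : Fin n) (h0 : g i₀ = none) :
    res (extB g i₀) = g := by
  funext i
  by_cases hi : i = i₀
  · subst hi
    rw [res_eq_none.2 (Or.inr (extB_cs_eq g i)), h0]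
  · cases hg : g i with
    | none => rw [res_eq_none, extB_cs_ne _ hi, hg]; simp
    | some j => rw [res_eq_some, extB_cs_ne _ hi, hg]; rfl

lemma extB_res {n : ℕ} {f : Fin (n+1) → Option (Fin (n+1))} {i₀ : Fin n}
    (h1 : ∀ i j, f i = some j → f j = some i ∧ j ≠ i)
    (hlast : f (Fin.last n) = some i₀.castSucc) :
    extB (res f) i₀ = f := by
  have hkey : ∀ i : Fin n, f i.castSucc = some (Fin.last n) ↔ i = i₀ := by
    intro i
    constructor
    · intro h
      have := (h1 _ _ h).1
      rw [hlast] at this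
      exact Fin.castSucc_injective _ (Option.some.inj this).symm
    · rintro rfl
      exact (h1 _ _ hlast).1
  funext i
  rcases castSucc_or_last i with ⟨i', rfl⟩ | rfl
  · by_cases hi : i' = i₀
    · subst hi
      rw [extB_cs_eq, ((hkey i').2 rfl)]
    · rw [extB_cs_ne _ hi]
      cases hf : f i'.castSucc with
      | none => rw [res_eq_none.2 (Or.inl hf)]; rfl
      | some j =>
        obtain ⟨j', rfl⟩ | rfl := castSucc_or_last j
        · rw [res_eq_some.2 hf]; rfl
        · exact absurd ((hkey i').1 hf) hi
  · rw [extB_last, hlast]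

noncomputable def equivA (n t : ℕ) :
    {x : M (n+1) (t+1) // x.1 (Fin.last n) = none} ≃ M n t where
  toFun x := ⟨res x.1.1, cond_res x.1.2.1, by
    have h := countA x.1.2.1.1 x.2
    rw [x.1.2.2] at h
    omega⟩
  invFun y := ⟨⟨ext y.1, cond_ext y.2.1, by rw [count_ext, y.2.2]⟩, ext_last _⟩
  left_inv x := by
    apply Subtype.ext; apply Subtype.ext
    exact ext_res x.1.2.1.1 x.2
  right_inv y := by
    apply Subtype.ext
    exact res_ext y.1

/-- the largest unmatched point -/
noncomputable def maxN {n t : ℕ} (y : M n (t+1)) : Fin n :=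
  (univ.filter fun i => y.1 i = none).max'
    (Finset.card_pos.1 (by rw [y.2.2]; omega))

lemma maxN_none {n t : ℕ} (y : M n (t+1)) : y.1 (maxN y) = none := by
  have := Finset.max'_mem (univ.filter fun i => y.1 i = none)
    (Finset.card_pos.1 (by rw [y.2.2]; omega))
  simpa [maxN] using this

lemma maxN_max {n t : ℕ} (y : M n (t+1)) : ∀ j, maxN y < j → y.1 j ≠ none := by
  intro j hj hnone
  have : j ≤ maxN y := Finset.le_max' _ j (by simp [hnone])
  exact absurd hj (not_lt.2 this)

lemma maxN_eq {n t : ℕ} (y : M n (t+1)) (i₀ : Fin n) (hnone : y.1 i₀ = none)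
    (hmax : ∀ l, i₀ < l → y.1 l ≠ none) : maxN y = i₀ := by
  apply le_antisymm
  · apply Finset.max'_le
    intro l hl
    simp only [mem_filter, mem_univ, true_and] at hl
    by_contra hcon
    exact hmax l (not_le.1 hcon) hl
  · exact Finset.le_max' _ _ (by simp [hnone])

noncomputable def equivB (n t : ℕ) :
    {x : M (n+1) t // x.1 (Fin.last n) ≠ none} ≃ M n (t+1) where
  toFun x := ⟨res x.1.1, cond_res x.1.2.1, by
    obtain ⟨j, hj⟩ := Option.ne_none_iff_exists'.1 x.2
    have hjlast : j ≠ Fin.last n := (x.1.2.1.1 _ _ hj).2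
    obtain ⟨i₀, rfl⟩ | rfl := castSucc_or_last j
    · rw [countB_res x.1.2.1.1 hj, x.1.2.2]
    · exact absurd rfl hjlast⟩
  invFun y := ⟨⟨extB y.1 (maxN y), cond_extB y.2.1 _ (maxN_none y) (maxN_max y), by
      have h := count_extB (g := y.1) (i₀ := maxN y) (maxN_none y)
      rw [y.2.2] at h
      omega⟩,
    by show extB _ _ _ ≠ none; rw [extB_last]; simp⟩
  left_inv x := by
    apply Subtype.ext; apply Subtype.ext
    obtain ⟨j, hj⟩ := Option.ne_none_iff_exists'.1 x.2
    have hjlast : j ≠ Fin.last n := (x.1.2.1.1 _ _ hj).2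
    obtain ⟨i₀, rfl⟩ | rfl := castSucc_or_last j
    · -- need: maxN of res equals i₀
      have hnone : res x.1.1 i₀ = none := res_eq_none.2 (Or.inr ((x.1.2.1.1 _ _ hj).1))
      have hmax : ∀ l, i₀ < l → res x.1.1 l ≠ none := by
        intro l hl hln
        rcases res_eq_none.1 hln with h | h
        · exact x.1.2.1.2.1 _ _ (x.1.2.1.1 _ _ hj).1 l.castSucc (cslt hl) (csltlast l) h
        · have := (x.1.2.1.1 _ _ h).1
          rw [hj] at this
          have : l = i₀ := Fin.castSucc_injective _ (Option.some.inj this).symm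
          subst this
          exact absurd hl (lt_irrefl _)
      show extB (res x.1.1) (maxN _) = x.1.1
      have hm : ∀ y : M n (t+1), y.1 = res x.1.1 → maxN y = i₀ :=
        fun y hy => maxN_eq y i₀ (hy ▸ hnone) (hy ▸ hmax)
      have key : ∀ y : M n (t+1), y.1 = res x.1.1 → extB (res x.1.1) (maxN y) = x.1.1 :=
        fun y hy => by rw [hm y hy]; exact extB_res x.1.2.1.1 hj
      refine key _ ?_
      rfl
    · exact absurd rfl hjlast
  right_inv y := by
    apply Subtype.ext
    exact res_extB y.1 (maxN y) (maxN_none y)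

lemma cardM_split (n t : ℕ) :
    Nat.card (M (n+1) t) = Nat.card {x : M (n+1) t // x.1 (Fin.last n) = none}
      + Nat.card {x : M (n+1) t // ¬ x.1 (Fin.last n) = none} := by
  classical
  rw [← Nat.card_sum]
  exact Nat.card_congr (Equiv.sumCompl (fun x : M (n+1) t => x.1 (Fin.last n) = none)).symm

lemma cardA0 (n : ℕ) : Nat.card {x : M (n+1) 0 // x.1 (Fin.last n) = none} = 0 := by
  have : IsEmpty {x : M (n+1) 0 // x.1 (Fin.last n) = none} := by
    constructor
    rintro ⟨x, hx⟩
    have h0 := x.2.2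
    rw [Finset.card_eq_zero] at h0
    have : Fin.last n ∈ univ.filter fun i => x.1 i = none := by simp [hx]
    rw [h0] at this
    exact absurd this (Finset.notMem_empty _)
  exact Nat.card_of_isEmpty

lemma card_succ_succ (n t : ℕ) :
    Nat.card (M (n+1) (t+1)) = Nat.card (M n t) + Nat.card (M n (t+2)) := by
  rw [cardM_split, Nat.card_congr (equivA n t), Nat.card_congr (equivB n (t+1))]

lemma card_succ_zero (n : ℕ) : Nat.card (M (n+1) 0) = Nat.card (M n 1) := by
  rw [cardM_split, cardA0, Nat.card_congr (equivB n 0), zero_add]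

lemma card_zero_zero : Nat.card (M 0 0) = 1 := by
  rw [Nat.card_eq_one_iff_unique]
  constructor
  · constructor
    intro a b
    apply Subtype.ext
    funext i
    exact i.elim0
  · exact ⟨⟨fun i => i.elim0, ⟨fun i => i.elim0, fun i => i.elim0, fun i => i.elim0⟩, by simp⟩⟩

lemma card_gt {n t : ℕ} (h : n < t) : Nat.card (M n t) = 0 := by
  have : IsEmpty (M n t) := by
    constructor
    intro x
    have h0 := x.2.2
    have : (univ.filter fun i => x.1 i = none).card ≤ n := by
      calc (univ.filter fun i => x.1 i = none).card ≤ (univ : Finset (Fin n)).card :=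
        Finset.card_filter_le _ _
      _ = n := by simp
    omega
  exact Nat.card_of_isEmpty

lemma main_count : ∀ n t k : ℕ, n = t + 2 * k →
    Nat.card (M n t) + (if k = 0 then 0 else n.choose (k-1)) = n.choose k := by
  intro n
  induction n with
  | zero =>
    intro t k h
    obtain ⟨rfl, rfl⟩ : t = 0 ∧ k = 0 := by omega
    simpa using card_zero_zero
  | succ n ih =>
    intro t k h
    cases t with
    | zero =>
      cases k with
      | zero => omega
      | succ m =>
        rw [card_succ_zero]
        have hn : n = 1 + 2 * m := by omega
        have ihm := ih 1 m hn
        rw [if_neg (Nat.succ_ne_zero _), Nat.add_sub_cancel]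
        cases m with
        | zero =>
          have hn1 : n = 1 := by omega
          subst hn1
          rw [if_pos rfl, add_zero] at ihm
          norm_num [Nat.choose] at ihm ⊢
          omega
        | succ m' =>
          have hsymm : n.choose (m'+1+1) = n.choose (m'+1) := by
            have h2 : n - (m'+1+1) = m'+1 := by omega
            have h3 := Nat.choose_symm (show m'+1+1 ≤ n by omega)
            rw [h2] at h3
            exact h3.symm
          have hp1 : (n+1).choose (m'+1) = n.choose m' + n.choose (m'+1) :=
            Nat.choose_succ_succ n m'
          have hp2 : (n+1).choose (m'+1+1) = n.choose (m'+1) + n.choose (m'+1+1) :=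
            Nat.choose_succ_succ n (m'+1)
          rw [if_neg (Nat.succ_ne_zero _), Nat.add_sub_cancel] at ihm
          omega
    | succ s =>
      rw [card_succ_succ]
      have hns : n = s + 2 * k := by omega
      have ih1 := ih s k hns
      cases k with
      | zero =>
        have hlt : n < s + 2 := by omega
        rw [card_gt hlt]
        rw [if_pos rfl, add_zero] at ih1 ⊢
        rw [Nat.choose_zero_right] at ih1 ⊢
        omega
      | succ m =>
        have ih2 := ih (s+2) m (by omega)
        rw [if_neg (Nat.succ_ne_zero _), Nat.add_sub_cancel] at ih1 ⊢
        cases m with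
        | zero =>
          rw [if_pos rfl, add_zero] at ih2
          rw [Nat.choose_zero_right] at ih1 ih2 ⊢
          rw [Nat.choose_one_right] at ih1 ⊢
          omega
        | succ m' =>
          have hp1 : (n+1).choose (m'+1) = n.choose m' + n.choose (m'+1) :=
            Nat.choose_succ_succ n m'
          have hp2 : (n+1).choose (m'+1+1) = n.choose (m'+1) + n.choose (m'+1+1) :=
            Nat.choose_succ_succ n (m'+1)
          rw [if_neg (Nat.succ_ne_zero _), Nat.add_sub_cancel] at ih2
          omega

end TLdim

/-- The dimension of the irreducible Temperley-Lieb module `V_n^t` is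
`C(n, (n-t)/2) - C(n, (n-t-2)/2)`.  Here `V_n^t` is encoded by its basis: partial
non-crossing matchings of `n` points (the top boundary points; `f i = some j`
means points `i` and `j` are joined by an arc) with exactly `t` unmatched points
(the through strings), such that no unmatched point lies under an arc.  Writing
`n = t + 2k`, the count is `C(n,k) - C(n,k-1)` (the subtracted term being `0`
when `k = 0`), stated additively to avoid truncated subtraction. -/
theorem tl_module_dimension (n t k : ℕ) (hn : n = t + 2 * k) :
    Nat.card {f : Fin n → Option (Fin n) //
      (∀ i j, f i = some j → f j = some i ∧ j ≠ i) ∧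
      (∀ i j, f i = some j → ∀ l, i < l → l < j → f l ≠ none) ∧
      (∀ i j a b, f i = some j → f a = some b → ¬(i < a ∧ a < j ∧ j < b)) ∧
      Nat.card {i : Fin n // f i = none} = t} +
      (if k = 0 then 0 else n.choose (k - 1)) = n.choose k := by
  have hcard : Nat.card {f : Fin n → Option (Fin n) //
      (∀ i j, f i = some j → f j = some i ∧ j ≠ i) ∧
      (∀ i j, f i = some j → ∀ l, i < l → l < j → f l ≠ none) ∧
      (∀ i j a b, f i = some j → f a = some b → ¬(i < a ∧ a < j ∧ j < b)) ∧
      Nat.card {i : Fin n // f i = none} = t} = Nat.card (TLdim.M n t) := by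
    apply Nat.card_congr
    apply Equiv.subtypeEquivRight
    intro f
    have : Nat.card {i : Fin n // f i = none} = (Finset.univ.filter fun i => f i = none).card := by
      rw [Nat.card_eq_fintype_card, Fintype.card_subtype]
    rw [this]
    unfold TLdim.Cond
    tauto
  rw [hcard]
  exact TLdim.main_count n t k hn
end

section
/- Let x > 0 be real and let r, k be positive integers with m = r + k. Then for any complex numbers z₁, z₂ of absolute value 1, z₁·sinh((r+2k)x) + z₂·sinh(rx) ≠ sinh(2mx). -/
lemma sinh_add_lt (a b : ℝ) (ha : 0 < a) (hb : 0 < b) :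
    Real.sinh a + Real.sinh b < Real.sinh (a + b) := by
  rw [Real.sinh_add]
  have h1 : 1 < Real.cosh b := Real.one_lt_cosh.mpr hb.ne'
  have h2 : 1 < Real.cosh a := Real.one_lt_cosh.mpr ha.ne'
  have := Real.sinh_pos_iff.mpr ha
  have := Real.sinh_pos_iff.mpr hb
  nlinarith

/-- For `x > 0`, positive integers `r, k` with `m = r + k`, and unimodular
complex numbers `z₁, z₂`:
`z₁ sinh((r+2k)x) + z₂ sinh(rx) ≠ sinh(2mx)`. -/
theorem no_null_vector (x : ℝ) (hx : 0 < x) (r k m : ℕ)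
    (hr : 1 ≤ r) (hk : 1 ≤ k) (hm : m = r + k)
    (z₁ z₂ : ℂ) (h₁ : ‖z₁‖ = 1) (h₂ : ‖z₂‖ = 1) :
    z₁ * (Real.sinh ((r + 2 * k) * x) : ℂ) + z₂ * (Real.sinh (r * x) : ℂ) ≠
      (Real.sinh (2 * m * x) : ℂ) := by
  intro h
  have ha : (0:ℝ) < ((r:ℝ) + 2 * k) * x := by
    have : (0:ℝ) < (r:ℝ) + 2 * k := by positivity
    exact mul_pos this hx
  have hb : (0:ℝ) < (r:ℝ) * x := by
    have : (0:ℝ) < (r:ℝ) := by exact_mod_cast hr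
    exact mul_pos this hx
  have hsum : ((r:ℝ) + 2 * k) * x + (r:ℝ) * x = 2 * m * x := by
    subst hm; push_cast; ring
  have hlt : Real.sinh (((r:ℝ) + 2 * k) * x) + Real.sinh ((r:ℝ) * x)
      < Real.sinh (2 * m * x) := by
    rw [← hsum]; exact sinh_add_lt _ _ ha hb
  have habs := congrArg (‖·‖) h
  have hA : 0 ≤ Real.sinh (((r:ℝ) + 2 * k) * x) := (Real.sinh_pos_iff.mpr ha).le
  have hB : 0 ≤ Real.sinh ((r:ℝ) * x) := (Real.sinh_pos_iff.mpr hb).le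
  have hC : 0 ≤ Real.sinh (2 * m * x) := by linarith
  have hle : ‖(z₁ * (Real.sinh ((r + 2 * k) * x) : ℂ)
      + z₂ * (Real.sinh (r * x) : ℂ))‖
      ≤ Real.sinh (((r:ℝ) + 2 * k) * x) + Real.sinh ((r:ℝ) * x) := by
    refine (norm_add_le _ _).trans ?_
    rw [norm_mul, norm_mul, h₁, h₂, one_mul, one_mul, Complex.norm_real,
      Complex.norm_real, Real.norm_eq_abs, Real.norm_eq_abs, abs_of_nonneg hA, abs_of_nonneg hB]
  rw [habs] at hle
  rw [Complex.norm_real, Real.norm_eq_abs, abs_of_nonneg hC] at hle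
  linarith
end
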